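/- Let A be a positive contraction on a complex Hilbert space H (0 ≤ A ≤ I). Then for all x, y ∈ H, |⟨x,y⟩| + √(⟨Ax,x⟩⟨Ay,y⟩) − |⟨Ax,y⟩| ≤ ‖x‖‖y‖. -/

import Mathlib

open scoped InnerProductSpace

/-- Cauchy–Schwarz for the semi-inner product induced by a positive operator. -/
lemma pos_op_cauchy_schwarz {H : Type*} [NormedAddCommGroup H]
    [InnerProductSpace ℂ H] [CompleteSpace H] (T : H →L[ℂ] H)
    (hT : T.IsPositive) (x y : H) :
    ‖⟪T x, y⟫_ℂ‖ ^ 2 ≤ (⟪T x, x⟫_ℂ).re * (⟪T y, y⟫_ℂ).re := by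
  have hsym := hT.isSelfAdjoint
  rw [ContinuousLinearMap.isSelfAdjoint_iff_isSymmetric] at hsym
  let c : PreInnerProductSpace.Core ℂ H :=
  { inner := fun a b => ⟪T a, b⟫_ℂ
    conj_inner_symm := fun a b => by
      show (starRingEnd ℂ) ⟪T b, a⟫_ℂ = ⟪T a, b⟫_ℂ
      rw [inner_conj_symm]
      exact (hsym a b).symm
    re_inner_nonneg := fun a => hT.re_inner_nonneg_left a
    add_left := fun a b z => by simp [inner_add_left]
    smul_left := fun a b r => by simp [inner_smul_left, mul_comm] }
  have h := @InnerProductSpace.Core.inner_mul_inner_self_le ℂ H _ _ _ c x y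
  have hswap : ‖(@inner ℂ H c.toInner y x)‖ = ‖(@inner ℂ H c.toInner x y)‖ := by
    rw [← c.conj_inner_symm x y]
    show ‖⟪T y, x⟫_ℂ‖ = ‖(starRingEnd ℂ) ⟪T y, x⟫_ℂ‖
    rw [RCLike.norm_conj]
  rw [hswap] at h
  rw [sq]; exact h

theorem contraction_cauchy_schwarz_refinement {H : Type*} [NormedAddCommGroup H]
    [InnerProductSpace ℂ H] [CompleteSpace H] (A : H →L[ℂ] H)
    (hA : A.IsPositive) (hA1 : ((1 : H →L[ℂ] H) - A).IsPositive) (x y : H) :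
    ‖⟪x, y⟫_ℂ‖ + Real.sqrt ((⟪A x, x⟫_ℂ).re * (⟪A y, y⟫_ℂ).re) - ‖⟪A x, y⟫_ℂ‖ ≤
      ‖x‖ * ‖y‖ := by
  set B : H →L[ℂ] H := (1 : H →L[ℂ] H) - A with hB
  -- abbreviations
  have hax : (0:ℝ) ≤ (⟪A x, x⟫_ℂ).re := hA.re_inner_nonneg_left x
  have hay : (0:ℝ) ≤ (⟪A y, y⟫_ℂ).re := hA.re_inner_nonneg_left y
  have hbx : (0:ℝ) ≤ (⟪B x, x⟫_ℂ).re := hA1.re_inner_nonneg_left x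
  have hby : (0:ℝ) ≤ (⟪B y, y⟫_ℂ).re := hA1.re_inner_nonneg_left y
  -- split ⟪x,y⟫ = ⟪Bx,y⟫ + ⟪Ax,y⟫
  have hsplit : ⟪x, y⟫_ℂ = ⟪B x, y⟫_ℂ + ⟪A x, y⟫_ℂ := by
    rw [hB]
    simp [inner_sub_left, ContinuousLinearMap.sub_apply]
  have h1 : ‖⟪x, y⟫_ℂ‖ ≤ ‖⟪B x, y⟫_ℂ‖ + ‖⟪A x, y⟫_ℂ‖ := by
    rw [hsplit]; exact norm_add_le _ _
  -- CS for B and A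
  have hcsB : ‖⟪B x, y⟫_ℂ‖ ≤ Real.sqrt ((⟪B x, x⟫_ℂ).re * (⟪B y, y⟫_ℂ).re) := by
    have := pos_op_cauchy_schwarz B hA1 x y
    have := Real.sqrt_le_sqrt this
    rwa [Real.sqrt_sq (norm_nonneg _)] at this
  -- norms squared decompose
  have hx2 : (⟪B x, x⟫_ℂ).re + (⟪A x, x⟫_ℂ).re = ‖x‖ ^ 2 := by
    have : (⟪B x, x⟫_ℂ) + (⟪A x, x⟫_ℂ) = ⟪x, x⟫_ℂ := by
      rw [hB]; simp [inner_sub_left, ContinuousLinearMap.sub_apply]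
    have h := congrArg Complex.re this
    simp only [Complex.add_re] at h
    rw [h]; exact inner_self_eq_norm_sq (𝕜 := ℂ) x
  have hy2 : (⟪B y, y⟫_ℂ).re + (⟪A y, y⟫_ℂ).re = ‖y‖ ^ 2 := by
    have : (⟪B y, y⟫_ℂ) + (⟪A y, y⟫_ℂ) = ⟪y, y⟫_ℂ := by
      rw [hB]; simp [inner_sub_left, ContinuousLinearMap.sub_apply]
    have h := congrArg Complex.re this
    simp only [Complex.add_re] at h
    rw [h]; exact inner_self_eq_norm_sq (𝕜 := ℂ) y
  -- key: √(bc·bd) + √(ac·ad) ≤ √(bc+ac)·√(bd+ad)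
  have key : Real.sqrt ((⟪B x, x⟫_ℂ).re * (⟪B y, y⟫_ℂ).re)
      + Real.sqrt ((⟪A x, x⟫_ℂ).re * (⟪A y, y⟫_ℂ).re) ≤ ‖x‖ * ‖y‖ := by
    have h2 : Real.sqrt ((⟪B x, x⟫_ℂ).re * (⟪B y, y⟫_ℂ).re)
        + Real.sqrt ((⟪A x, x⟫_ℂ).re * (⟪A y, y⟫_ℂ).re)
        ≤ Real.sqrt (((⟪B x, x⟫_ℂ).re + (⟪A x, x⟫_ℂ).re)
            * ((⟪B y, y⟫_ℂ).re + (⟪A y, y⟫_ℂ).re)) := by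
      rw [Real.sqrt_mul hbx, Real.sqrt_mul hax,
        Real.sqrt_mul (by positivity)]
      set u := Real.sqrt ((⟪B x, x⟫_ℂ).re) * Real.sqrt ((⟪B y, y⟫_ℂ).re)
        + Real.sqrt ((⟪A x, x⟫_ℂ).re) * Real.sqrt ((⟪A y, y⟫_ℂ).re) with hu
      set v := Real.sqrt ((⟪B x, x⟫_ℂ).re + (⟪A x, x⟫_ℂ).re)
        * Real.sqrt ((⟪B y, y⟫_ℂ).re + (⟪A y, y⟫_ℂ).re) with hv
      have hun : 0 ≤ u := by positivity
      have hvn : 0 ≤ v := by positivity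
      have hsq : u ^ 2 ≤ v ^ 2 := by
        rw [hu, hv, mul_pow, Real.sq_sqrt (by positivity), Real.sq_sqrt (by positivity)]
        nlinarith [Real.sq_sqrt hbx, Real.sq_sqrt hax, Real.sq_sqrt hby, Real.sq_sqrt hay,
          Real.sqrt_nonneg ((⟪B x, x⟫_ℂ).re), Real.sqrt_nonneg ((⟪A x, x⟫_ℂ).re),
          Real.sqrt_nonneg ((⟪B y, y⟫_ℂ).re), Real.sqrt_nonneg ((⟪A y, y⟫_ℂ).re),
          sq_nonneg (Real.sqrt ((⟪B x, x⟫_ℂ).re) * Real.sqrt ((⟪A y, y⟫_ℂ).re)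
            - Real.sqrt ((⟪A x, x⟫_ℂ).re) * Real.sqrt ((⟪B y, y⟫_ℂ).re))]
      have := Real.sqrt_le_sqrt hsq
      rwa [Real.sqrt_sq hun, Real.sqrt_sq hvn] at this
    rw [hx2, hy2] at h2
    calc _ ≤ Real.sqrt (‖x‖ ^ 2 * ‖y‖ ^ 2) := h2
      _ = ‖x‖ * ‖y‖ := by
        rw [← mul_pow, Real.sqrt_sq (by positivity)]
  linarith [hcsB, h1, key]
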